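/- Let G be a connected multigraph and f a divisor on G. Then in any non-empty legal game starting from f whose resulting divisor is f itself, every vertex of G fires the same number of times. -/

import Mathlib

variable {V : Type*} [Fintype V] [DecidableEq V]

/-- The degree of vertex `v` in the multigraph with edge-multiplicity function `m`. -/
def mgDeg (m : V → V → ℕ) (v : V) : ℕ := ∑ u, m v u

/-- The divisor obtained from `f` by firing vertex `v`. -/
def mgFire (m : V → V → ℕ) (f : V → ℤ) (v : V) : V → ℤ :=
  fun u => if u = v then f v - mgDeg m v else f u + m v u

/-- The divisor obtained from `f` by firing the vertices of `L` in order. -/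
def mgPlay (m : V → V → ℕ) (f : V → ℤ) (L : List V) : V → ℤ :=
  L.foldl (mgFire m) f

/-- `L` is a legal game from `f`: each fired vertex is active when fired. -/
def mgLegal (m : V → V → ℕ) : (V → ℤ) → List V → Prop
  | _, [] => True
  | f, v :: L => ((mgDeg m v : ℤ) ≤ f v) ∧ mgLegal m (mgFire m f v) L

/-- A divisor is stable if no vertex is active. -/
def mgStable (m : V → V → ℕ) (f : V → ℤ) : Prop := ∀ v, f v < (mgDeg m v : ℤ)

/-- A divisor is halting if some legal game from it ends at a stable divisor. -/
def mgHalting (m : V → V → ℕ) (f : V → ℤ) : Prop :=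
  ∃ L : List V, mgLegal m f L ∧ mgStable m (mgPlay m f L)

/-- A divisor is recurrent if some non-empty legal game from it leads back to it. -/
def mgRecurrent (m : V → V → ℕ) (f : V → ℤ) : Prop :=
  ∃ L : List V, L ≠ [] ∧ mgLegal m f L ∧ mgPlay m f L = f

/-- A divisor is effective if it is nonnegative everywhere. -/
def mgEffective (f : V → ℤ) : Prop := ∀ v, 0 ≤ f v

/-- The degree of a divisor. -/
def mgDegDiv (f : V → ℤ) : ℤ := ∑ v, f v

/-- Distance of a divisor from a recurrent state. -/
noncomputable def mgDistRec (m : V → V → ℕ) (f : V → ℤ) : ℕ :=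
  sInf {n : ℕ | ∃ g : V → ℤ, mgEffective g ∧ mgDegDiv g = (n : ℤ) ∧ mgRecurrent m (f + g)}

/-- Distance of a divisor from a non-halting state. -/
noncomputable def mgDistNonhalt (m : V → V → ℕ) (f : V → ℤ) : ℕ :=
  sInf {n : ℕ | ∃ g : V → ℤ, mgEffective g ∧ mgDegDiv g = (n : ℤ) ∧ ¬ mgHalting m (f + g)}

/-- A multigraph is connected if any two vertices are joined by a path of
positive-multiplicity edges. -/
def mgConnected (m : V → V → ℕ) : Prop :=
  ∀ u v : V, Relation.ReflTransGen (fun a b => 0 < m a b) u v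

/-- `f` and `g` are linearly equivalent: `f` can be transformed to `g` by firings. -/
def mgLinEquiv (m : V → V → ℕ) (f g : V → ℤ) : Prop :=
  ∃ L : List V, mgPlay m f L = g

/-- A divisor is winnable if it is linearly equivalent to an effective divisor. -/
def mgWinnable (m : V → V → ℕ) (f : V → ℤ) : Prop :=
  ∃ g : V → ℤ, mgEffective g ∧ mgLinEquiv m f g

/-- The rank of a divisor. -/
noncomputable def mgRank (m : V → V → ℕ) (f : V → ℤ) : ℤ :=
  ((sInf {n : ℕ | ∃ g : V → ℤ, mgEffective g ∧ mgDegDiv g = (n : ℤ) ∧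
    ¬ mgWinnable m (f - g)} : ℕ) : ℤ) - 1

lemma mgPlay_eval (m : V → V → ℕ) (hloop : ∀ v, m v v = 0) :
    ∀ (L : List V) (f : V → ℤ) (w : V),
    mgPlay m f L w = f w + (∑ u, (L.count u : ℤ) * m u w) - (L.count w : ℤ) * mgDeg m w := by
  intro L
  induction L with
  | nil => intro f w; simp [mgPlay]
  | cons v L ih =>
    intro f w
    have h1 : mgPlay m f (v :: L) w = mgPlay m (mgFire m f v) L w := rfl
    rw [h1, ih]
    have hc : ∀ u : V, (((v :: L).count u : ℤ)) = (L.count u : ℤ) + if u = v then 1 else 0 := by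
      intro u
      by_cases h : u = v <;> simp [h, List.count_cons, @eq_comm _ v u]
    have hsum : (∑ u, ((v :: L).count u : ℤ) * m u w)
        = (∑ u, (L.count u : ℤ) * m u w) + m v w := by
      calc (∑ u, ((v :: L).count u : ℤ) * m u w)
          = ∑ u, ((L.count u : ℤ) * m u w + if u = v then (m u w : ℤ) else 0) := by
            refine Finset.sum_congr rfl fun u _ => ?_
            rw [hc u]
            by_cases h : u = v <;> simp [h] <;> ring
        _ = (∑ u, (L.count u : ℤ) * m u w) + ∑ u, (if u = v then (m u w : ℤ) else 0) := by
            rw [Finset.sum_add_distrib]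
        _ = (∑ u, (L.count u : ℤ) * m u w) + m v w := by
            rw [Finset.sum_ite_eq' Finset.univ v (fun u => (m u w : ℤ))]
            simp
    rw [hsum, hc w]
    by_cases h : w = v
    · subst h
      simp [mgFire, hloop]
      ring
    · simp [mgFire, h]
      ring

/-- In any non-empty legal game from `f` on a connected multigraph whose
resulting divisor is `f` itself, every vertex fires the same number of times. -/
theorem stmt4 [Nonempty V] (m : V → V → ℕ) (hsymm : ∀ u v, m u v = m v u)
    (hloop : ∀ v, m v v = 0) (hconn : mgConnected m) (f : V → ℤ) (L : List V)
    (hne : L ≠ []) (hL : mgLegal m f L) (hret : mgPlay m f L = f) :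
    ∀ u v : V, L.count u = L.count v := by
  classical
  have key : ∀ w : V, (∑ u, (L.count u : ℤ) * m u w) = (L.count w : ℤ) * mgDeg m w := by
    intro w
    have := mgPlay_eval m hloop L f w
    rw [hret] at this
    linarith
  obtain ⟨u0, -, hu0⟩ := Finset.exists_min_image Finset.univ
    (fun v => (L.count v : ℤ)) ⟨Classical.arbitrary V, Finset.mem_univ _⟩
  have hmin : ∀ v : V, (L.count u0 : ℤ) ≤ (L.count v : ℤ) := fun v => hu0 v (Finset.mem_univ v)
  have step : ∀ a b : V, (L.count a : ℤ) = (L.count u0 : ℤ) → 0 < m a b →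
      (L.count b : ℤ) = (L.count u0 : ℤ) := by
    intro a b ha hab
    have hdeg : (mgDeg m a : ℤ) = ∑ u, (m u a : ℤ) := by
      simp only [mgDeg, Nat.cast_sum]
      exact Finset.sum_congr rfl fun u _ => by rw [hsymm]
    have hz : ∑ u, ((L.count u : ℤ) - (L.count u0 : ℤ)) * m u a = 0 := by
      have h2 : ∑ u, ((L.count u : ℤ) - (L.count u0 : ℤ)) * m u a
          = (∑ u, (L.count u : ℤ) * m u a) - (L.count u0 : ℤ) * ∑ u, (m u a : ℤ) := by
        rw [Finset.mul_sum, ← Finset.sum_sub_distrib]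
        exact Finset.sum_congr rfl fun u _ => by ring
      rw [h2, key a, ← hdeg, ha]
      ring
    have hnn : ∀ u ∈ Finset.univ, (0:ℤ) ≤ ((L.count u : ℤ) - (L.count u0 : ℤ)) * m u a :=
      fun u _ => mul_nonneg (by linarith [hmin u]) (by positivity)
    have hb := (Finset.sum_eq_zero_iff_of_nonneg hnn).mp hz b (Finset.mem_univ b)
    have hmba : (0:ℤ) < (m b a : ℤ) := by
      have : m b a = m a b := hsymm b a
      exact_mod_cast this ▸ hab
    rcases mul_eq_zero.mp hb with h | h
    · linarith
    · exact absurd h (by positivity)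
  have hall : ∀ v : V, (L.count v : ℤ) = (L.count u0 : ℤ) := by
    intro v
    have h := hconn u0 v
    induction h with
    | refl => rfl
    | tail _ hbc ih => exact step _ _ ih hbc
  intro u v
  have : (L.count u : ℤ) = (L.count v : ℤ) := by rw [hall u, hall v]
  exact_mod_cast this
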